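/- For all linear characters φ, φ' of U and every linear character ν of Z, one has ⟨Ind_{ZU}^G(ν⊗φ), Ind_{ZU}^G(ν⊗φ')⟩_G = (1/|Z|)·⟨Ind_U^G(φ), Ind_U^G(φ')⟩_G. -/

import Mathlib

open scoped Classical

/-- The linear character of a subgroup `H` of `G`, extended by zero to a function on `G`. -/
noncomputable def extChar {G : Type*} [Group G] (H : Subgroup G) (φ : H →* ℂ) : G → ℂ :=
  fun g => if h : g ∈ H then φ ⟨g, h⟩ else 0

/-- The linear character `ν ⊗ φ` of the subgroup `ZU`, extended by zero to `G`:
its value at `g = z * u` (with `z ∈ Z`, `u ∈ U`) is `ν z * φ u`, and it vanishes off `ZU`. -/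
noncomputable def tensorChar {G : Type*} [Group G] [Fintype G] (Z U : Subgroup G)
    (ν : Z →* ℂ) (φ : U →* ℂ) : G → ℂ :=
  fun g => ∑ z : Z, ∑ u : U, if (z : G) * (u : G) = g then ν z * φ u else 0

/-- Induction to `G` of a class function of the subgroup `H`, extended by zero to `G`. -/
noncomputable def indChar {G : Type*} [Group G] [Fintype G] (H : Subgroup G)
    (f : G → ℂ) : G → ℂ :=
  fun g => (Fintype.card H : ℂ)⁻¹ * ∑ x : G, f (x * g * x⁻¹)

/-- The inner product `⟨α, β⟩_H = |H|⁻¹ * Σ_{x ∈ H} α x * conj (β x)` of (the restrictions to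
the subgroup `H` of) two functions `α β : G → ℂ`. -/
noncomputable def innerSub {G : Type*} [Group G] [Fintype G] (H : Subgroup G)
    (α β : G → ℂ) : ℂ :=
  (Fintype.card H : ℂ)⁻¹ * ∑ x : H, α x * (starRingEnd ℂ) (β x)

section Aux

open Pointwise

variable {G : Type*} [Group G] [Fintype G]

private lemma sum_top (f : G → ℂ) : ∑ x : (⊤ : Subgroup G), f ↑x = ∑ g : G, f g :=
  Fintype.sum_equiv Subgroup.topEquiv.toEquiv _ _ (fun _ => rfl)

private lemma card_top' : Fintype.card (⊤ : Subgroup G) = Fintype.card G :=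
  Fintype.card_congr Subgroup.topEquiv.toEquiv

/-- `⟨Ind f, Ind f'⟩ = |H|⁻² Σ_t Σ_h f h conj (f' (t h t⁻¹))`. -/
private lemma lemA (H : Subgroup G) (f f' : G → ℂ) :
    innerSub ⊤ (indChar H f) (indChar H f')
      = (Fintype.card H : ℂ)⁻¹ * ((Fintype.card H : ℂ)⁻¹ *
          ∑ t : G, ∑ h : G, f h * (starRingEnd ℂ) (f' (t * h * t⁻¹))) := by
  have hG : (Fintype.card G : ℂ) ≠ 0 := Nat.cast_ne_zero.2 Fintype.card_ne_zero
  unfold innerSub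
  rw [card_top', sum_top (fun g => indChar H f g * (starRingEnd ℂ) (indChar H f' g))]
  have key : ∀ g : G, indChar H f g * (starRingEnd ℂ) (indChar H f' g)
      = (Fintype.card H : ℂ)⁻¹ * ((Fintype.card H : ℂ)⁻¹ *
          ∑ x : G, ∑ y : G, f (x * g * x⁻¹) * (starRingEnd ℂ) (f' (y * g * y⁻¹))) := by
    intro g
    simp only [indChar, map_mul, map_inv₀, map_natCast, map_sum]
    rw [mul_mul_mul_comm, Finset.sum_mul_sum, mul_assoc]
  simp only [key]
  rw [← Finset.mul_sum, ← Finset.mul_sum]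
  have hswap : (∑ g : G, ∑ x : G, ∑ y : G,
        f (x * g * x⁻¹) * (starRingEnd ℂ) (f' (y * g * y⁻¹)))
      = (Fintype.card G : ℂ) * ∑ t : G, ∑ h : G, f h * (starRingEnd ℂ) (f' (t * h * t⁻¹)) := by
    rw [Finset.sum_comm]
    have hx : ∀ x : G, (∑ g : G, ∑ y : G,
          f (x * g * x⁻¹) * (starRingEnd ℂ) (f' (y * g * y⁻¹)))
        = ∑ h : G, ∑ t : G, f h * (starRingEnd ℂ) (f' (t * h * t⁻¹)) := by
      intro x
      apply Fintype.sum_equiv (MulAut.conj x).toEquiv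
      intro g
      apply Fintype.sum_equiv (Equiv.mulRight x⁻¹)
      intro y
      have h1 : y * x⁻¹ * (x * g * x⁻¹) * (y * x⁻¹)⁻¹ = y * g * y⁻¹ := by group
      simp only [MulEquiv.toEquiv_eq_coe, MulEquiv.coe_toEquiv, MulAut.conj_apply,
        Equiv.coe_mulRight]
      rw [h1]
    calc (∑ x : G, ∑ g : G, ∑ y : G,
            f (x * g * x⁻¹) * (starRingEnd ℂ) (f' (y * g * y⁻¹)))
        = ∑ _x : G, ∑ h : G, ∑ t : G, f h * (starRingEnd ℂ) (f' (t * h * t⁻¹)) :=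
          Finset.sum_congr rfl (fun x _ => hx x)
      _ = (Fintype.card G : ℂ) * ∑ h : G, ∑ t : G, f h * (starRingEnd ℂ) (f' (t * h * t⁻¹)) := by
          rw [Finset.sum_const, Finset.card_univ, nsmul_eq_mul]
      _ = (Fintype.card G : ℂ) * ∑ t : G, ∑ h : G, f h * (starRingEnd ℂ) (f' (t * h * t⁻¹)) := by
          rw [Finset.sum_comm]
  rw [hswap]
  field_simp

variable (Z U : Subgroup G)

private lemma uniq (hZU : Z ⊓ U = ⊥) {z z₀ : Z} {u u₀ : U}
    (h : (z : G) * (u : G) = (z₀ : G) * (u₀ : G)) : z = z₀ ∧ u = u₀ := by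
  have hmem : ((z₀⁻¹ * z : Z) : G) ∈ Z ⊓ U := by
    constructor
    · exact (z₀⁻¹ * z).2
    · have : ((z₀⁻¹ * z : Z) : G) = (u₀ : G) * (u : G)⁻¹ := by
        push_cast
        rw [eq_mul_inv_iff_mul_eq, mul_assoc, h, ← mul_assoc, inv_mul_cancel, one_mul]
      rw [this]
      exact U.mul_mem u₀.2 (U.inv_mem u.2)
  rw [hZU, Subgroup.mem_bot] at hmem
  have hz : z = z₀ := by
    have : (z₀⁻¹ * z : Z) = 1 := Subtype.ext hmem
    rw [inv_mul_eq_one] at this; exact this.symm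
  refine ⟨hz, ?_⟩
  subst hz
  exact Subtype.ext (mul_left_cancel h)

private lemma tensor_at_mul (hZU : Z ⊓ U = ⊥) (ν : Z →* ℂ) (φ : U →* ℂ) (z₀ : Z) (u₀ : U) :
    tensorChar Z U ν φ ((z₀ : G) * (u₀ : G)) = ν z₀ * φ u₀ := by
  unfold tensorChar
  rw [Fintype.sum_eq_single z₀]
  · rw [Fintype.sum_eq_single u₀]
    · rw [if_pos rfl]
    · intro u hu
      rw [if_neg]
      intro hc
      exact hu (uniq Z U hZU hc).2
  · intro z hz
    apply Finset.sum_eq_zero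
    intro u _
    rw [if_neg]
    intro hc
    exact hz (uniq Z U hZU hc).1

private lemma central_coprime (hZ : Z ≤ Subgroup.center G)
    (hcop : Nat.Coprime (Fintype.card Z) (Fintype.card U))
    {w : G} (hw : w ^ Fintype.card U = 1) {z z' : Z} {u' : U}
    (h : (z' : G) * (u' : G) = (z : G) * w) : w ∈ U := by
  set c : Z := z⁻¹ * z' with hc
  have hwcu : w = (c : G) * (u' : G) := by
    push_cast [hc]
    rw [mul_assoc, h, ← mul_assoc, inv_mul_cancel, one_mul]
  have hcomm : Commute ((c : G)) ((u' : G)) :=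
    (Subgroup.mem_center_iff.1 (hZ c.2) _).symm
  have hpowU : (c : G) ^ Fintype.card U = 1 := by
    have h1 : ((u' : G)) ^ Fintype.card U = 1 := by
      rw [← Subgroup.coe_pow, pow_card_eq_one, Subgroup.coe_one]
    have := hw
    rw [hwcu, hcomm.mul_pow, h1, mul_one] at this
    exact this
  have hpowZ : (c : G) ^ Fintype.card Z = 1 := by
    rw [← Subgroup.coe_pow, pow_card_eq_one, Subgroup.coe_one]
  have h1 : (c : G) = 1 := by
    have hd : orderOf ((c : G)) ∣ Nat.gcd (Fintype.card Z) (Fintype.card U) :=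
      Nat.dvd_gcd (orderOf_dvd_of_pow_eq_one hpowZ) (orderOf_dvd_of_pow_eq_one hpowU)
    rw [hcop] at hd
    exact orderOf_eq_one_iff.1 (Nat.dvd_one.1 hd)
  rw [hwcu, h1, one_mul]
  exact u'.2

/-- Lemma C : value of the tensor character at `z * w` where `w` has order dividing `|U|`. -/
private lemma tensor_central (hZ : Z ≤ Subgroup.center G) (hZU : Z ⊓ U = ⊥)
    (hcop : Nat.Coprime (Fintype.card Z) (Fintype.card U))
    (ν : Z →* ℂ) (φ : U →* ℂ) (z : Z) {w : G} (hw : w ^ Fintype.card U = 1) :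
    tensorChar Z U ν φ ((z : G) * w) = ν z * extChar U φ w := by
  by_cases hwU : w ∈ U
  · have : (z : G) * w = (z : G) * ((⟨w, hwU⟩ : U) : G) := rfl
    rw [this, tensor_at_mul Z U hZU, extChar, dif_pos hwU]
  · rw [show extChar U φ w = 0 from dif_neg hwU, mul_zero]
    unfold tensorChar
    apply Finset.sum_eq_zero
    intro z' _
    apply Finset.sum_eq_zero
    intro u' _
    rw [if_neg]
    intro hc
    exact hwU (central_coprime Z U hZ hcop hw hc)

private lemma sum_tensor (ν : Z →* ℂ) (φ : U →* ℂ) (w : G → ℂ) :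
    ∑ h : G, tensorChar Z U ν φ h * w h
      = ∑ z : Z, ∑ u : U, ν z * φ u * w ((z : G) * (u : G)) := by
  unfold tensorChar
  simp only [Finset.sum_mul, ite_mul, zero_mul]
  rw [Finset.sum_comm]
  apply Finset.sum_congr rfl
  intro z _
  rw [Finset.sum_comm]
  apply Finset.sum_congr rfl
  intro u _
  rw [Finset.sum_ite_eq Finset.univ ((z : G) * (u : G)) (fun h => ν z * φ u * w h),
    if_pos (Finset.mem_univ _)]

private lemma sum_ext (φ : U →* ℂ) (w : G → ℂ) :
    ∑ h : G, extChar U φ h * w h = ∑ u : U, φ u * w (u : G) := by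
  have key : ∀ h : G, extChar U φ h * w h
      = ∑ u : U, if (u : G) = h then φ u * w h else 0 := by
    intro h
    by_cases hh : h ∈ U
    · rw [show extChar U φ h = φ ⟨h, hh⟩ from dif_pos hh]
      rw [Fintype.sum_eq_single (⟨h, hh⟩ : U)]
      · rw [if_pos rfl]
      · intro u hu
        rw [if_neg]
        intro hc
        exact hu (Subtype.ext hc)
    · rw [show extChar U φ h = 0 from dif_neg hh, zero_mul]
      symm
      apply Finset.sum_eq_zero
      intro u _
      rw [if_neg]
      intro hc
      exact hh (hc ▸ u.2)
  simp only [key]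
  rw [Finset.sum_comm]
  apply Finset.sum_congr rfl
  intro u _
  rw [Finset.sum_ite_eq Finset.univ ((u : G)) (fun h => φ u * w h),
    if_pos (Finset.mem_univ _)]

private lemma nu_unit (ν : Z →* ℂ) (z : Z) : ν z * (starRingEnd ℂ) (ν z) = 1 := by
  have h1 : ν z ^ Fintype.card Z = 1 := by
    rw [← map_pow, pow_card_eq_one, map_one]
  have habs : ‖ν z‖ = 1 :=
    Complex.norm_eq_one_of_pow_eq_one h1 Fintype.card_ne_zero
  rw [Complex.mul_conj, Complex.normSq_eq_norm_sq, habs]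
  norm_num

private lemma card_sup (hZ : Z ≤ Subgroup.center G) (hZU : Z ⊓ U = ⊥) :
    Fintype.card ↥(Z ⊔ U) = Fintype.card Z * Fintype.card U := by
  have hnormal : Z.Normal := by
    constructor
    intro n hn g
    have hcomm := Subgroup.mem_center_iff.1 (hZ hn) g
    rw [hcomm, mul_assoc, mul_inv_cancel, mul_one]
    exact hn
  have hbij : Function.Bijective (fun p : Z × U =>
      (⟨(p.1 : G) * (p.2 : G), Subgroup.mul_mem _ (Subgroup.mem_sup_left p.1.2)
        (Subgroup.mem_sup_right p.2.2)⟩ : ↥(Z ⊔ U))) := by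
    constructor
    · intro p q h
      have h' : (p.1 : G) * (p.2 : G) = (q.1 : G) * (q.2 : G) := congrArg Subtype.val h
      obtain ⟨h1, h2⟩ := uniq Z U hZU h'
      exact Prod.ext h1 h2
    · rintro ⟨g, hg⟩
      have hmem : g ∈ (Z : Set G) * (U : Set G) := by
        rw [← Subgroup.normal_mul]
        exact hg
      rw [Set.mem_mul] at hmem
      obtain ⟨z, hz, u, hu, rfl⟩ := hmem
      exact ⟨(⟨z, hz⟩, ⟨u, hu⟩), rfl⟩
  rw [← Fintype.card_prod, Fintype.card_of_bijective hbij]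

end Aux

/-- `⟨Ind_{ZU}^G(ν ⊗ φ), Ind_{ZU}^G(ν ⊗ φ')⟩_G = (1/|Z|) * ⟨Ind_U^G(φ), Ind_U^G(φ')⟩_G`. -/
theorem stmt5 {G : Type*} [Group G] [Fintype G] (Z U : Subgroup G)
    (hZ : Z ≤ Subgroup.center G) (hZU : Z ⊓ U = ⊥)
    (hcop : Nat.Coprime (Fintype.card Z) (Fintype.card U))
    (φ φ' : U →* ℂ) (ν : Z →* ℂ) :
    innerSub ⊤ (indChar (Z ⊔ U) (tensorChar Z U ν φ)) (indChar (Z ⊔ U) (tensorChar Z U ν φ')) =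
      (Fintype.card Z : ℂ)⁻¹ *
        innerSub ⊤ (indChar U (extChar U φ)) (indChar U (extChar U φ')) := by
  rw [lemA, lemA, card_sup Z U hZ hZU]
  have hZ0 : (Fintype.card Z : ℂ) ≠ 0 := Nat.cast_ne_zero.2 Fintype.card_ne_zero
  have hU0 : (Fintype.card U : ℂ) ≠ 0 := Nat.cast_ne_zero.2 Fintype.card_ne_zero
  have hS : (∑ t : G, ∑ h : G,
        tensorChar Z U ν φ h * (starRingEnd ℂ) (tensorChar Z U ν φ' (t * h * t⁻¹)))
      = (Fintype.card Z : ℂ) * ∑ t : G, ∑ h : G,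
          extChar U φ h * (starRingEnd ℂ) (extChar U φ' (t * h * t⁻¹)) := by
    rw [Finset.mul_sum]
    apply Finset.sum_congr rfl
    intro t _
    rw [sum_tensor Z U ν φ (fun h => (starRingEnd ℂ) (tensorChar Z U ν φ' (t * h * t⁻¹))),
      sum_ext U φ (fun h => (starRingEnd ℂ) (extChar U φ' (t * h * t⁻¹)))]
    have key : ∀ (z : Z) (u : U),
        ν z * φ u * (starRingEnd ℂ) (tensorChar Z U ν φ' (t * ((z : G) * (u : G)) * t⁻¹))
          = φ u * (starRingEnd ℂ) (extChar U φ' (t * (u : G) * t⁻¹)) := by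
      intro z u
      have hcen : t * ((z : G) * (u : G)) * t⁻¹ = (z : G) * (t * (u : G) * t⁻¹) := by
        have hcomm := Subgroup.mem_center_iff.1 (hZ z.2) t
        rw [← mul_assoc, ← mul_assoc, hcomm]
        simp [mul_assoc]
      have hw : (t * (u : G) * t⁻¹) ^ Fintype.card U = 1 := by
        rw [conj_pow, ← Subgroup.coe_pow, pow_card_eq_one, Subgroup.coe_one, mul_one,
          mul_inv_cancel]
      rw [hcen, tensor_central Z U hZ hZU hcop ν φ' z hw, map_mul]
      calc ν z * φ u * ((starRingEnd ℂ) (ν z) * (starRingEnd ℂ) (extChar U φ' (t * (u : G) * t⁻¹)))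
          = (ν z * (starRingEnd ℂ) (ν z)) *
            (φ u * (starRingEnd ℂ) (extChar U φ' (t * (u : G) * t⁻¹))) := by ring
        _ = _ := by rw [nu_unit Z ν z, one_mul]
    calc (∑ z : Z, ∑ u : U,
          ν z * φ u * (starRingEnd ℂ) (tensorChar Z U ν φ' (t * ((z : G) * (u : G)) * t⁻¹)))
        = ∑ _z : Z, ∑ u : U, φ u * (starRingEnd ℂ) (extChar U φ' (t * (u : G) * t⁻¹)) := by
          apply Finset.sum_congr rfl; intro z _
          apply Finset.sum_congr rfl; intro u _
          exact key z u
      _ = (Fintype.card Z : ℂ) * ∑ u : U, φ u * (starRingEnd ℂ) (extChar U φ' (t * (u : G) * t⁻¹)) := by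
          rw [Finset.sum_const, Finset.card_univ, nsmul_eq_mul]
  rw [hS]
  push_cast
  field_simp
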